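/- Let d, n, m be positive integers with m ≤ n, let ω be a primitive d-th root of unity in ℂ, and fix complex numbers y₁,…,y_m. Let T_m ⊆ (ℤ/d)^n be the set of tuples with at least m entries equal to 0, and let I₁,…,I_k be representatives of the permutation-equivalence classes of T_m. Define P_i(x₁,…,x_n) = Σ_{I ∈ perm(I_i)} x^I, summing over all distinct permutations of I_i. Then every polynomial Q(x_{m+1},…,x_n) that is symmetric in its variables and of degree at most d−1 in each variable can be written as a ℂ-linear combination Σ c_i P_i(y₁,…,y_m, x_{m+1},…,x_n). -/

import Mathlib

open scoped Classical
open MvPolynomial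

section Helpers

lemma exists_comp_perm_eq {α β : Type*} [Fintype α] [DecidableEq α] [DecidableEq β]
    (f g : α → β)
    (h : ∀ v : β, (Finset.univ.filter fun a => f a = v).card
        = (Finset.univ.filter fun a => g a = v).card) :
    ∃ σ : Equiv.Perm α, f ∘ σ = g := by
  have e : ∀ v, {a // g a = v} ≃ {a // f a = v} := fun v =>
    Fintype.equivOfCardEq (by rw [Fintype.card_subtype, Fintype.card_subtype, h])
  exact ⟨Equiv.ofFiberEquiv e, funext fun a => Equiv.ofFiberEquiv_map e a⟩

lemma card_fiber_comp {α β : Type*} [Fintype α] [DecidableEq α] [DecidableEq β]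
    (f : α → β) (π : Equiv.Perm α) (v : β) :
    (Finset.univ.filter fun a => f (π a) = v).card
      = (Finset.univ.filter fun a => f a = v).card := by
  apply Finset.card_bij (fun a _ => π a)
  · intro a ha
    simp only [Finset.mem_filter, Finset.mem_univ, true_and] at ha ⊢
    exact ha
  · intro a _ b _ hab
    exact π.injective hab
  · intro b hb
    refine ⟨π.symm b, ?_, by simp⟩
    simp only [Finset.mem_filter, Finset.mem_univ, true_and, Equiv.apply_symm_apply] at hb ⊢
    exact hb

lemma exists_perm_comp_eq_fixing {α β : Type*} [Fintype α] [DecidableEq α] [DecidableEq β]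
    (p : α → Prop) [DecidablePred p]
    (f g : α → β) (z : β)
    (π : Equiv.Perm α) (hπ : f ∘ π = g)
    (hf : ∀ j, p j → f j = z) (hg : ∀ j, p j → g j = z) :
    ∃ ρ : Equiv.Perm α, f ∘ ρ = g ∧ ∀ j, p j → ρ j = j := by
  have hcnt : ∀ v : β, (Finset.univ.filter fun a => f a = v).card
      = (Finset.univ.filter fun a => g a = v).card := by
    intro v
    rw [← card_fiber_comp f π v]
    congr 1
    ext a
    simp [← congrFun hπ a, Function.comp]
  have key : ∀ (h : α → β),
      ∀ v : β, (Finset.univ.filter fun a : {j // ¬ p j} => h a.1 = v).card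
        = (Finset.univ.filter fun a => ¬ p a ∧ h a = v).card := by
    intro h v
    rw [← Fintype.card_subtype, ← Fintype.card_subtype]
    exact Fintype.card_congr
      ((Equiv.subtypeSubtypeEquivSubtypeInter (fun j => ¬ p j) (fun j => h j = v)))
  have hcnt' : ∀ v : β,
      (Finset.univ.filter fun a : {j // ¬ p j} => f a.1 = v).card
        = (Finset.univ.filter fun a : {j // ¬ p j} => g a.1 = v).card := by
    intro v
    rw [key f v, key g v]
    by_cases hv : v = z
    · have h1 : ∀ (h : α → β), (∀ j, p j → h j = v) →
          (Finset.univ.filter fun a => ¬ p a ∧ h a = v)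
            = (Finset.univ.filter fun a => h a = v) \ (Finset.univ.filter p) := by
        intro h hh
        ext a
        simp only [Finset.mem_filter, Finset.mem_univ, true_and, Finset.mem_sdiff]
        tauto
      rw [h1 f (fun j hj => (hf j hj).trans hv.symm), h1 g (fun j hj => (hg j hj).trans hv.symm),
        Finset.card_sdiff_of_subset, Finset.card_sdiff_of_subset, hcnt]
      · intro a ha
        simp only [Finset.mem_filter, Finset.mem_univ, true_and] at ha ⊢
        exact (hg a ha).trans hv.symm
      · intro a ha
        simp only [Finset.mem_filter, Finset.mem_univ, true_and] at ha ⊢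
        exact (hf a ha).trans hv.symm
    · have h2 : ∀ (h : α → β), (∀ j, p j → h j = z) →
          (Finset.univ.filter fun a => ¬ p a ∧ h a = v)
            = (Finset.univ.filter fun a => h a = v) := by
        intro h hh
        ext a
        simp only [Finset.mem_filter, Finset.mem_univ, true_and, and_iff_right_iff_imp]
        intro hav hpa
        exact absurd (hav.symm.trans (hh a hpa)) hv
      rw [h2 f hf, h2 g hg, hcnt]
  obtain ⟨τ, hτ⟩ := exists_comp_perm_eq (fun a : {j // ¬ p j} => f a.1)
    (fun a : {j // ¬ p j} => g a.1) hcnt'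
  refine ⟨Equiv.Perm.subtypeCongr (1 : Equiv.Perm {j // p j}) τ, funext fun a => ?_,
    fun j hj => ?_⟩
  · by_cases ha : p a
    · rw [Function.comp_apply, Equiv.Perm.subtypeCongr.left_apply _ _ ha]
      simp only [Equiv.Perm.coe_one, id_eq]
      rw [hf a ha, hg a ha]
    · rw [Function.comp_apply, Equiv.Perm.subtypeCongr.right_apply _ _ ha]
      exact congrFun hτ ⟨a, ha⟩
  · rw [Equiv.Perm.subtypeCongr.left_apply _ _ hj]
    simp

lemma nat_sum_union_le {α : Type*} [DecidableEq α] (s t : Finset α) (f : α → ℕ) :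
    ∑ x ∈ s ∪ t, f x ≤ ∑ x ∈ s, f x + ∑ x ∈ t, f x := by
  rw [← Finset.sum_union_inter]
  exact Nat.le_add_right _ _

end Helpers

section Defs

/-- substitution map -/
noncomputable def SSub (n m : ℕ) (y : Fin m → ℂ) : Fin n → MvPolynomial (Fin n) ℂ :=
  fun j : Fin n => if h : (j : ℕ) < m then MvPolynomial.C (y ⟨j, h⟩) else MvPolynomial.X j

/-- exponent finsupp of a tuple -/
noncomputable def SExpo {d n : ℕ} (J : Fin n → Fin d) : Fin n →₀ ℕ :=
  Finsupp.equivFunOnFinite.symm fun t : Fin n => ((J t : ℕ))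

/-- truncated exponent -/
noncomputable def STrunc (m : ℕ) {d n : ℕ} (J : Fin n → Fin d) : Fin n →₀ ℕ :=
  Finsupp.equivFunOnFinite.symm fun t : Fin n => if (t : ℕ) < m then 0 else (J t : ℕ)

/-- coefficient from substituted variables -/
noncomputable def SW (m : ℕ) {d n : ℕ} (y : Fin m → ℂ) (J : Fin n → Fin d) : ℂ :=
  ∏ j : Fin n, if h : (j : ℕ) < m then (y ⟨j, h⟩) ^ (J j : ℕ) else 1

/-- orbit of a tuple -/
noncomputable def SOrb {d n : ℕ} (f : Fin n → Fin d) : Finset (Fin n → Fin d) :=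
  Finset.univ.filter (fun J : Fin n → Fin d => ∃ σ : Equiv.Perm (Fin n), f ∘ σ = J)

/-- substituted orbit polynomial -/
noncomputable def SPhat {d : ℕ} (n m : ℕ) (y : Fin m → ℂ) (f : Fin n → Fin d) :
    MvPolynomial (Fin n) ℂ :=
  MvPolynomial.aeval (SSub n m y) (∑ J ∈ SOrb f, MvPolynomial.monomial (SExpo J) (1 : ℂ))

/-- goodness predicate -/
def SGood (d n m : ℕ) (Q : MvPolynomial (Fin n) ℂ) : Prop :=
  (∀ u ∈ Q.support, (∀ j : Fin n, (j : ℕ) < m → u j = 0) ∧ ∀ j : Fin n, u j ≤ d - 1) ∧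
  ∀ σ : Equiv.Perm (Fin n), (∀ j : Fin n, (j : ℕ) < m → σ j = j) →
    MvPolynomial.rename σ Q = Q

/-- weight measure -/
noncomputable def SMu {n : ℕ} (Q : MvPolynomial (Fin n) ℂ) : ℕ :=
  ∑ u ∈ Q.support, (Nat.factorial n + 1) ^ (∑ j : Fin n, u j)

end Defs

section Lemmas

lemma SExpo_apply {d n : ℕ} (J : Fin n → Fin d) (t : Fin n) : SExpo J t = (J t : ℕ) := rfl

lemma STrunc_apply {d n : ℕ} (m : ℕ) (J : Fin n → Fin d) (t : Fin n) :
    STrunc m J t = if (t : ℕ) < m then 0 else (J t : ℕ) := rfl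

lemma SExpo_injective {d n : ℕ} : Function.Injective (SExpo (d := d) (n := n)) := by
  intro J J' h
  funext t
  have := congrFun (congrArg (fun (u : Fin n →₀ ℕ) => (u : Fin n → ℕ)) h) t
  simpa [SExpo_apply, Fin.val_inj] using this

lemma aeval_mono {d : ℕ} (n m : ℕ) (y : Fin m → ℂ) (J : Fin n → Fin d) :
    MvPolynomial.aeval (SSub n m y) (MvPolynomial.monomial (SExpo J) (1 : ℂ))
      = MvPolynomial.monomial (STrunc m J) (SW m y J) := by
  rw [MvPolynomial.aeval_monomial, MvPolynomial.monomial_eq]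
  rw [Finsupp.prod_fintype _ _ (fun i => pow_zero _),
      Finsupp.prod_fintype _ _ (fun i => pow_zero _)]
  simp only [map_one, one_mul]
  unfold SW
  rw [map_prod, ← Finset.prod_mul_distrib]
  apply Finset.prod_congr rfl
  intro j _
  rw [SExpo_apply, STrunc_apply]
  unfold SSub
  split_ifs with h
  · simp [map_pow]
  · simp

lemma SOrb_self {d n : ℕ} (f : Fin n → Fin d) : f ∈ SOrb f := by
  simp only [SOrb, Finset.mem_filter, Finset.mem_univ, true_and]
  exact ⟨1, by funext x; simp⟩

lemma SOrb_mem {d n : ℕ} {f J : Fin n → Fin d} (h : J ∈ SOrb f) :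
    ∃ σ : Equiv.Perm (Fin n), f ∘ σ = J := by
  simpa [SOrb] using h

lemma SOrb_mem' {d n : ℕ} (f : Fin n → Fin d) (J : Fin n → Fin d)
    (σ : Equiv.Perm (Fin n)) (h : f ∘ σ = J) : J ∈ SOrb f := by
  simp only [SOrb, Finset.mem_filter, Finset.mem_univ, true_and]
  exact ⟨σ, h⟩

lemma SOrb_card {d n : ℕ} (f : Fin n → Fin d) : (SOrb f).card ≤ Nat.factorial n := by
  have hsub : SOrb f ⊆ (Finset.univ : Finset (Equiv.Perm (Fin n))).image
      (fun τ : Equiv.Perm (Fin n) => f ∘ τ) := by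
    intro J hJ
    obtain ⟨σ, hσ⟩ := SOrb_mem hJ
    exact Finset.mem_image.2 ⟨σ, Finset.mem_univ _, hσ⟩
  refine le_trans (Finset.card_le_card hsub) (le_trans Finset.card_image_le ?_)
  rw [Finset.card_univ, Fintype.card_perm, Fintype.card_fin]

lemma SOrb_degsum {d n : ℕ} (f : Fin n → Fin d) {J : Fin n → Fin d} (h : J ∈ SOrb f) :
    ∑ j : Fin n, (J j : ℕ) = ∑ j : Fin n, (f j : ℕ) := by
  obtain ⟨σ, hσ⟩ := SOrb_mem h
  rw [← hσ]
  exact Equiv.sum_comp σ (fun j => (f j : ℕ))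

/-- symmetry of the substituted orbit polynomial -/
lemma SPhat_rename {d : ℕ} (n m : ℕ) (y : Fin m → ℂ) (f : Fin n → Fin d)
    (σ : Equiv.Perm (Fin n)) (hσ : ∀ j : Fin n, (j : ℕ) < m → σ j = j) :
    MvPolynomial.rename σ (SPhat n m y f) = SPhat n m y f := by
  have hσ' : ∀ j : Fin n, ¬ ((j : ℕ) < m) → ¬ ((σ j : ℕ) < m) := by
    intro j hj hc
    have h1 : σ (σ j) = σ j := hσ (σ j) hc
    have h2 : σ j = j := σ.injective h1
    rw [h2] at hc
    exact hj hc
  unfold SPhat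
  rw [← AlgHom.comp_apply, MvPolynomial.comp_aeval]
  have hsub : (fun i => MvPolynomial.rename σ (SSub n m y i)) = (SSub n m y) ∘ ⇑σ := by
    funext j
    by_cases h : (j : ℕ) < m
    · have hj : σ j = j := hσ j h
      simp only [Function.comp_apply, hj]
      simp [SSub, h, MvPolynomial.rename_C]
    · simp only [Function.comp_apply]
      simp [SSub, dif_neg h, dif_neg (hσ' j h), MvPolynomial.rename_X]
  rw [hsub, ← MvPolynomial.aeval_rename]
  congr 1
  rw [map_sum]
  have hmap : ∀ J : Fin n → Fin d,
      MvPolynomial.rename (⇑σ) (MvPolynomial.monomial (SExpo J) (1 : ℂ))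
        = MvPolynomial.monomial (SExpo (J ∘ ⇑σ.symm)) (1 : ℂ) := by
    intro J
    rw [MvPolynomial.rename_monomial]
    have hmd : Finsupp.mapDomain (⇑σ) (SExpo J) = SExpo (J ∘ ⇑σ.symm) := by
      ext t
      have ht : t = σ (σ.symm t) := (σ.apply_symm_apply t).symm
      rw [ht, Finsupp.mapDomain_apply σ.injective]
      simp [SExpo_apply]
    rw [hmd]
  rw [Finset.sum_congr rfl (fun J _ => hmap J)]
  apply Finset.sum_bij' (fun J _ => J ∘ ⇑σ.symm) (fun J _ => J ∘ ⇑σ)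
  · intro J hJ
    obtain ⟨τ, hτ⟩ := SOrb_mem hJ
    refine SOrb_mem' f _ (σ.symm.trans τ) ?_
    funext x
    simp only [Function.comp_apply, Equiv.trans_apply]
    exact congrFun hτ (σ.symm x)
  · intro J hJ
    obtain ⟨τ, hτ⟩ := SOrb_mem hJ
    refine SOrb_mem' f _ (σ.trans τ) ?_
    funext x
    simp only [Function.comp_apply, Equiv.trans_apply]
    exact congrFun hτ (σ x)
  · intro J _
    funext x
    simp
  · intro J _
    funext x
    simp
  · intro J _
    rfl

end Lemmas
section Main

lemma main_ind (d n m : ℕ) (hd : 0 < d) (hm : m ≤ n) {k : ℕ}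
    (y : Fin m → ℂ) (Irep : Fin k → (Fin n → Fin d))
    (hcover : ∀ I : Fin n → Fin d,
      m ≤ (Finset.univ.filter fun j => I j = (⟨0, hd⟩ : Fin d)).card →
      ∃ (i : Fin k) (σ : Equiv.Perm (Fin n)), I ∘ σ = Irep i) :
    ∀ N : ℕ, ∀ Q : MvPolynomial (Fin n) ℂ, SMu Q ≤ N → SGood d n m Q →
      Q ∈ Submodule.span ℂ (Set.range (fun i : Fin k => SPhat n m y (Irep i))) := by
  have hcoeff_sum : ∀ (s : Finset (Fin n → Fin d)) (e : (Fin n → Fin d) → (Fin n →₀ ℕ))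
      (c : (Fin n → Fin d) → ℂ) (u : Fin n →₀ ℕ),
      MvPolynomial.coeff u (∑ J ∈ s, MvPolynomial.monomial (e J) (c J))
        = ∑ J ∈ s, if e J = u then c J else 0 := by
    intro s e c u
    rw [MvPolynomial.coeff_sum]
    exact Finset.sum_congr rfl fun J _ => MvPolynomial.coeff_monomial u (e J) (c J)
  intro N
  induction N with
  | zero =>
    intro Q hmu hgood
    by_cases hQ : Q = 0
    · simpa [hQ] using Submodule.zero_mem _
    · exfalso
      obtain ⟨u₀, hu₀⟩ := MvPolynomial.support_nonempty.2 hQ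
      have h1 : 0 < (Nat.factorial n + 1) ^ (∑ j : Fin n, u₀ j) := pow_pos (by omega) _
      have h2 : (Nat.factorial n + 1) ^ (∑ j : Fin n, u₀ j) ≤ SMu Q :=
        Finset.single_le_sum (f := fun u : Fin n →₀ ℕ => (Nat.factorial n + 1) ^ (∑ j : Fin n, u j))
          (fun _ _ => Nat.zero_le _) hu₀
      omega
  | succ N IH =>
    intro Q hmu hgood
    by_cases hQ : Q = 0
    · simpa [hQ] using Submodule.zero_mem _
    obtain ⟨u₀, hu₀s⟩ := MvPolynomial.support_nonempty.2 hQ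
    set B := Nat.factorial n + 1 with hB
    have hBpos : 0 < B := by omega
    set a := MvPolynomial.coeff u₀ Q with ha
    have ha0 : a ≠ 0 := MvPolynomial.mem_support_iff.mp hu₀s
    have hu₀p := hgood.1 u₀ hu₀s
    have hud : ∀ j, u₀ j < d := fun j => lt_of_le_of_lt (hu₀p.2 j) (by omega)
    set I : Fin n → Fin d := fun j => ⟨u₀ j, hud j⟩ with hI
    -- I has at least m zeros
    have hIzeros : m ≤ (Finset.univ.filter fun j => I j = (⟨0, hd⟩ : Fin d)).card := by
      have hcard := Finset.card_le_card_of_injOn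
        (f := fun t : Fin m => (⟨(t : ℕ), lt_of_lt_of_le t.2 hm⟩ : Fin n))
        (s := (Finset.univ : Finset (Fin m)))
        (t := Finset.univ.filter fun j => I j = (⟨0, hd⟩ : Fin d))
        (fun t _ => by
          simp only [Finset.mem_coe, Finset.mem_filter, Finset.mem_univ, true_and]
          exact Fin.ext (hu₀p.1 _ t.2))
        (fun t1 _ t2 _ h => by simpa [Fin.ext_iff] using h)
      simpa using hcard
    obtain ⟨i, σ₀, hσ₀⟩ := hcover I hIzeros
    have hIorb : I ∈ SOrb (Irep i) := by
      refine SOrb_mem' _ _ σ₀.symm ?_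
      funext x
      have h1 := congrFun hσ₀ (σ₀.symm x)
      simpa using h1.symm
    set D := ∑ j : Fin n, u₀ j with hD
    have hexpoI : SExpo I = u₀ := by
      ext t; rfl
    have hdegO : ∀ J ∈ SOrb (Irep i), ∑ j : Fin n, (J j : ℕ) = D := by
      intro J hJ
      have h1 := SOrb_degsum (Irep i) hJ
      have h2 := SOrb_degsum (Irep i) hIorb
      rw [h1, ← h2]
    set p : (Fin n → Fin d) → Prop := fun J => ∀ j : Fin n, (j : ℕ) < m → (J j : ℕ) = 0
      with hp
    set orbZ := (SOrb (Irep i)).filter p with horbZ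
    set orbN := (SOrb (Irep i)).filter (fun J => ¬ p J) with horbN
    have hIZ : I ∈ orbZ := Finset.mem_filter.2 ⟨hIorb, fun j hj => hu₀p.1 j hj⟩
    set M := ∑ J ∈ orbZ, MvPolynomial.monomial (SExpo J) (1 : ℂ) with hM
    set R := ∑ J ∈ orbN, MvPolynomial.monomial (STrunc m J) (SW m y J) with hR
    have hMR : SPhat n m y (Irep i) = M + R := by
      unfold SPhat
      rw [map_sum, Finset.sum_congr rfl (fun J _ => aeval_mono n m y J),
        ← Finset.sum_filter_add_sum_filter_not (SOrb (Irep i)) p]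
      rw [hM, hR, ← horbZ, ← horbN]
      congr 1
      apply Finset.sum_congr rfl
      intro J hJ
      have hz : p J := (Finset.mem_filter.1 hJ).2
      have h1 : STrunc m J = SExpo J := by
        ext t
        rw [STrunc_apply, SExpo_apply]
        split_ifs with h
        · exact (hz t h).symm
        · rfl
      have h2 : SW m y J = 1 := by
        unfold SW
        apply Finset.prod_eq_one
        intro j _
        split_ifs with h
        · rw [hz j h, pow_zero]
        · rfl
      rw [h1, h2]
    -- coefficient facts
    have hcM : ∀ J₀ ∈ orbZ, MvPolynomial.coeff (SExpo J₀) M = 1 := by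
      intro J₀ hJ₀
      rw [hM, hcoeff_sum]
      rw [Finset.sum_eq_single J₀]
      · simp
      · intro J _ hne
        exact if_neg (fun h => hne (SExpo_injective h))
      · intro h; exact absurd hJ₀ h
    have hcMex : ∀ u, MvPolynomial.coeff u M ≠ 0 → ∃ J ∈ orbZ, SExpo J = u := by
      intro u h
      by_contra hc
      push_neg at hc
      exact h (by
        rw [hM, hcoeff_sum]
        exact Finset.sum_eq_zero fun J hJ => if_neg (fun he => hc J hJ he))
    have hcRex : ∀ u, MvPolynomial.coeff u R ≠ 0 → ∃ J ∈ orbN, STrunc m J = u := by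
      intro u h
      by_contra hc
      push_neg at hc
      exact h (by
        rw [hR, hcoeff_sum]
        exact Finset.sum_eq_zero fun J hJ => if_neg (fun he => hc J hJ he))
    have hTdeg : ∀ J ∈ orbN, ∑ j : Fin n, (STrunc m J) j < D := by
      intro J hJ
      have hJm := Finset.mem_filter.1 hJ
      have hnp : ¬ p J := hJm.2
      simp only [hp] at hnp
      push_neg at hnp
      obtain ⟨j₀, hj₀m, hj₀⟩ := hnp
      have hlt : ∑ j : Fin n, (STrunc m J) j < ∑ j : Fin n, (J j : ℕ) := by
        apply Finset.sum_lt_sum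
        · intro t _
          rw [STrunc_apply]
          split_ifs with h
          · exact Nat.zero_le _
          · exact le_rfl
        · refine ⟨j₀, Finset.mem_univ _, ?_⟩
          rw [STrunc_apply, if_pos hj₀m]
          omega
      rw [hdegO J hJm.1] at hlt
      exact hlt
    have hcR0' : ∀ u : Fin n →₀ ℕ, (∑ j : Fin n, u j = D) → MvPolynomial.coeff u R = 0 := by
      intro u hud'
      by_contra h
      obtain ⟨J, hJ, hJu⟩ := hcRex u h
      have := hTdeg J hJ
      rw [hJu, hud'] at this
      omega
    -- coefficients of Q on the zero-orbit
    have hZcoeff : ∀ J ∈ orbZ, MvPolynomial.coeff (SExpo J) Q = a := by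
      intro J hJ
      have hJm := Finset.mem_filter.1 hJ
      obtain ⟨τJ, hτJ⟩ := SOrb_mem hJm.1
      obtain ⟨τI, hτI⟩ := SOrb_mem hIorb
      have hπ : I ∘ ⇑(τJ.trans τI.symm) = J := by
        funext x
        simp only [Function.comp_apply, Equiv.trans_apply]
        have h1 := congrFun hτI (τI.symm (τJ x))
        simp only [Function.comp_apply, Equiv.apply_symm_apply] at h1
        rw [← h1]
        exact congrFun hτJ x
      have hpJ : p J := hJm.2
      rw [hp] at hpJ
      obtain ⟨ρ, hρ, hρfix⟩ := exists_perm_comp_eq_fixing (fun j : Fin n => (j : ℕ) < m)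
        I J (⟨0, hd⟩ : Fin d) _ hπ
        (fun j hj => Fin.ext (hu₀p.1 j hj))
        (fun j hj => Fin.ext (hpJ j hj))
      have hρfix' : ∀ j : Fin n, (j : ℕ) < m → ρ.symm j = j := by
        intro j hj
        exact (Equiv.symm_apply_eq ρ).2 (hρfix j hj).symm
      have hmd : Finsupp.mapDomain (⇑ρ.symm) u₀ = SExpo J := by
        ext t
        have h1 : (Finsupp.mapDomain (⇑ρ.symm) u₀) t = u₀ (ρ t) := by
          conv_lhs => rw [show t = ρ.symm (ρ t) by rw [ρ.symm_apply_apply]]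
          rw [Finsupp.mapDomain_apply ρ.symm.injective]
        rw [h1, SExpo_apply, ← congrFun hρ t]
        rfl
      rw [← hmd]
      calc MvPolynomial.coeff (Finsupp.mapDomain (⇑ρ.symm) u₀) Q
          = MvPolynomial.coeff (Finsupp.mapDomain (⇑ρ.symm) u₀)
              (MvPolynomial.rename (⇑ρ.symm) Q) := by
            rw [hgood.2 ρ.symm hρfix']
        _ = MvPolynomial.coeff u₀ Q :=
            MvPolynomial.coeff_rename_mapDomain _ ρ.symm.injective Q u₀
        _ = a := rfl
    set ZS := orbZ.image SExpo with hZS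
    set TS := orbN.image (STrunc m) with hTS
    have hZS_supp : ZS ⊆ Q.support := by
      intro u hu
      obtain ⟨J, hJ, rfl⟩ := Finset.mem_image.1 hu
      rw [MvPolynomial.mem_support_iff, hZcoeff J hJ]
      exact ha0
    have hu₀ZS : u₀ ∈ ZS := Finset.mem_image.2 ⟨I, hIZ, hexpoI⟩
    have hZSdeg : ∀ u ∈ ZS, ∑ j : Fin n, u j = D := by
      intro u hu
      obtain ⟨J, hJ, rfl⟩ := Finset.mem_image.1 hu
      exact hdegO J (Finset.mem_filter.1 hJ).1
    set Q' := Q - a • SPhat n m y (Irep i) with hQ'def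
    have hQ'Z : ∀ u ∈ ZS, MvPolynomial.coeff u Q' = 0 := by
      intro u hu
      obtain ⟨J, hJ, rfl⟩ := Finset.mem_image.1 hu
      rw [hQ'def, MvPolynomial.coeff_sub, MvPolynomial.coeff_smul, hMR,
        MvPolynomial.coeff_add, hZcoeff J hJ, hcM J hJ,
        hcR0' (SExpo J) (hZSdeg _ (Finset.mem_image.2 ⟨J, hJ, rfl⟩)), smul_eq_mul]
      ring
    have hQ'coeff : ∀ u : Fin n →₀ ℕ, MvPolynomial.coeff u Q' ≠ 0 →
        MvPolynomial.coeff u Q ≠ 0 ∨ (MvPolynomial.coeff u M ≠ 0 ∨ MvPolynomial.coeff u R ≠ 0) := by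
      intro u hu
      by_contra hc
      push_neg at hc
      apply hu
      rw [hQ'def, MvPolynomial.coeff_sub, MvPolynomial.coeff_smul, hMR,
        MvPolynomial.coeff_add, hc.1, hc.2.1, hc.2.2]
      simp
    have hgood' : SGood d n m Q' := by
      constructor
      · intro u hu
        rcases hQ'coeff u (MvPolynomial.mem_support_iff.1 hu) with h | h | h
        · exact hgood.1 u (MvPolynomial.mem_support_iff.2 h)
        · obtain ⟨J, hJ, rfl⟩ := hcMex u h
          have hpJ : p J := (Finset.mem_filter.1 hJ).2
          rw [hp] at hpJ
          constructor
          · intro j hj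
            rw [SExpo_apply]
            exact hpJ j hj
          · intro j
            rw [SExpo_apply]
            have := (J j).2
            omega
        · obtain ⟨J, hJ, rfl⟩ := hcRex u h
          constructor
          · intro j hj
            rw [STrunc_apply, if_pos hj]
          · intro j
            rw [STrunc_apply]
            have := (J j).2
            split_ifs <;> omega
      · intro σ hσ
        rw [hQ'def]
        simp only [MvPolynomial.smul_eq_C_mul]
        rw [map_sub, map_mul, MvPolynomial.rename_C, hgood.2 σ hσ,
          SPhat_rename n m y (Irep i) σ hσ]
    have hsupp' : Q'.support ⊆ (Q.support \ ZS) ∪ TS := by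
      intro u hu
      have hCne := MvPolynomial.mem_support_iff.1 hu
      have huZ : u ∉ ZS := fun h => hCne (hQ'Z u h)
      rcases hQ'coeff u hCne with h | h | h
      · exact Finset.mem_union_left _ (Finset.mem_sdiff.2 ⟨MvPolynomial.mem_support_iff.2 h, huZ⟩)
      · obtain ⟨J, hJ, he⟩ := hcMex u h
        exact absurd (Finset.mem_image.2 ⟨J, hJ, he⟩) huZ
      · obtain ⟨J, hJ, he⟩ := hcRex u h
        exact Finset.mem_union_right _ (Finset.mem_image.2 ⟨J, hJ, he⟩)
    -- measure decrease
    have hSMu : ∀ P : MvPolynomial (Fin n) ℂ, SMu P = ∑ u ∈ P.support, B ^ (∑ j : Fin n, u j) :=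
      fun P => rfl
    have hmu1 : SMu Q' + ∑ u ∈ ZS, B ^ (∑ j : Fin n, u j)
        ≤ SMu Q + ∑ u ∈ TS, B ^ (∑ j : Fin n, u j) := by
      have h1 : SMu Q' ≤ ∑ u ∈ (Q.support \ ZS) ∪ TS, B ^ (∑ j : Fin n, u j) := by
        rw [hSMu]
        exact Finset.sum_le_sum_of_subset hsupp'
      have h2 := nat_sum_union_le (Q.support \ ZS) TS (fun u => B ^ (∑ j : Fin n, u j))
      have h3 : (∑ u ∈ Q.support \ ZS, B ^ (∑ j : Fin n, u j))
          + ∑ u ∈ ZS, B ^ (∑ j : Fin n, u j) = SMu Q := by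
        rw [hSMu]
        exact Finset.sum_sdiff hZS_supp
      omega
    have hZml : B ^ D ≤ ∑ u ∈ ZS, B ^ (∑ j : Fin n, u j) := by
      have h1 := Finset.single_le_sum (f := fun u : Fin n →₀ ℕ => B ^ (∑ j : Fin n, u j))
        (fun u _ => Nat.zero_le _) hu₀ZS
      exact h1
    have hTSlt : ∑ u ∈ TS, B ^ (∑ j : Fin n, u j) < B ^ D := by
      rcases Finset.eq_empty_or_nonempty orbN with hne | hne
      · rw [hTS, hne]
        simpa using pow_pos hBpos D
      · obtain ⟨J₁, hJ₁⟩ := hne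
        have hD1 : 1 ≤ D := by
          have hJm := Finset.mem_filter.1 hJ₁
          have hnp : ¬ p J₁ := hJm.2
          simp only [hp] at hnp
          push_neg at hnp
          obtain ⟨j₀, _, hj₀⟩ := hnp
          have hle : (J₁ j₀ : ℕ) ≤ ∑ j : Fin n, (J₁ j : ℕ) :=
            Finset.single_le_sum (f := fun j : Fin n => (J₁ j : ℕ))
              (fun _ _ => Nat.zero_le _) (Finset.mem_univ j₀)
          have := hdegO J₁ hJm.1
          omega
        have hbe : ∀ u ∈ TS, B ^ (∑ j : Fin n, u j) ≤ B ^ (D - 1) := by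
          intro u hu
          obtain ⟨J, hJ, rfl⟩ := Finset.mem_image.1 hu
          apply Nat.pow_le_pow_right (by omega)
          have := hTdeg J hJ
          omega
        calc ∑ u ∈ TS, B ^ (∑ j : Fin n, u j) ≤ TS.card * B ^ (D - 1) := by
              have := Finset.sum_le_card_nsmul TS (fun u => B ^ (∑ j : Fin n, u j))
                (B ^ (D - 1)) hbe
              simpa [smul_eq_mul] using this
          _ ≤ (Nat.factorial n) * B ^ (D - 1) := by
              apply Nat.mul_le_mul_right
              refine le_trans Finset.card_image_le (le_trans ?_ (SOrb_card (Irep i)))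
              rw [horbN]
              exact Finset.card_filter_le _ _
          _ < B * B ^ (D - 1) := by
              apply mul_lt_mul_of_pos_right _ (pow_pos hBpos _)
              omega
          _ = B ^ D := by
              rw [show D = (D - 1) + 1 by omega, pow_succ']
              simp
    have hQ'mu : SMu Q' ≤ N := by omega
    have hQ'mem := IH Q' hQ'mu hgood'
    have hPmem : SPhat n m y (Irep i)
        ∈ Submodule.span ℂ (Set.range (fun i : Fin k => SPhat n m y (Irep i))) :=
      Submodule.subset_span ⟨i, rfl⟩
    have hQeq : Q = Q' + a • SPhat n m y (Irep i) := by
      rw [hQ'def, sub_add_cancel]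
    rw [hQeq]
    exact Submodule.add_mem _ hQ'mem (Submodule.smul_mem _ a hPmem)

end Main
theorem symmetric_span (d n m k : ℕ) (hd : 0 < d) (hm : m ≤ n)
    (y : Fin m → ℂ)
    (Irep : Fin k → (Fin n → Fin d))
    (hmem : ∀ i, m ≤ (Finset.univ.filter fun j => Irep i j = (⟨0, hd⟩ : Fin d)).card)
    (hdistinct : ∀ i i' : Fin k,
      (∃ σ : Equiv.Perm (Fin n), Irep i ∘ σ = Irep i') → i = i')
    (hcover : ∀ I : Fin n → Fin d,
      m ≤ (Finset.univ.filter fun j => I j = (⟨0, hd⟩ : Fin d)).card →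
      ∃ (i : Fin k) (σ : Equiv.Perm (Fin n)), I ∘ σ = Irep i)
    (Q : MvPolynomial (Fin n) ℂ)
    (hQvars : ∀ j : Fin n, (j : ℕ) < m → Q.degreeOf j = 0)
    (hQsym : ∀ σ : Equiv.Perm (Fin n), (∀ j : Fin n, (j : ℕ) < m → σ j = j) →
      MvPolynomial.rename σ Q = Q)
    (hQdeg : ∀ j : Fin n, Q.degreeOf j ≤ d - 1) :
    ∃ c : Fin k → ℂ,
      Q = ∑ i : Fin k, c i •
        (MvPolynomial.aeval
          (fun j : Fin n => if h : (j : ℕ) < m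
            then MvPolynomial.C (y ⟨j, h⟩)
            else MvPolynomial.X j)
          (∑ J ∈ Finset.univ.filter
              (fun J : Fin n → Fin d => ∃ σ : Equiv.Perm (Fin n), Irep i ∘ σ = J),
            MvPolynomial.monomial
              (Finsupp.equivFunOnFinite.symm fun t : Fin n => ((J t : ℕ)))
              (1 : ℂ))) := by
  have hgood : SGood d n m Q := by
    constructor
    · intro u hu
      have hle : ∀ j : Fin n, u j ≤ Q.degreeOf j := by
        intro j
        rw [MvPolynomial.degreeOf_eq_sup]
        exact Finset.le_sup (f := fun v : Fin n →₀ ℕ => v j) hu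
      constructor
      · intro j hj
        have := hle j
        rw [hQvars j hj] at this
        omega
      · intro j
        exact le_trans (hle j) (hQdeg j)
    · exact hQsym
  have hspan := main_ind d n m hd hm y Irep hcover (SMu Q) Q le_rfl hgood
  rw [Submodule.mem_span_range_iff_exists_fun] at hspan
  obtain ⟨c, hc⟩ := hspan
  exact ⟨c, hc.symm⟩
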